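/- Let Q = Q(N,(m_i),(X_i)) be the quandle of the construction, let N′ be the set of n ∈ N such that d(x) = x + n + X_i (for all i ∈ I, x ∈ Q_i) defines a displacement of Q, and let N″ be the Λ-submodule of N generated by (⋂_{i ∈ I} X_i) ∪ (1−t)·N ∪ {m_j − m_k : j, k ∈ I}. Then N″ = N′, and the kernel of the surjective Λ-linear map N′ → Dis(Q), n ↦ d_n, is exactly ⋂_{i ∈ I} X_i. -/

import Mathlib

open LaurentPolynomial

set_option synthInstance.maxHeartbeats 1000000
set_option maxHeartbeats 1000000

noncomputable section

/-- The ring `Λ = ℤ[t,t⁻¹]` of Laurent polynomials with integer coefficients. -/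
abbrev Λ : Type := LaurentPolynomial ℤ

/-- The variable `t ∈ Λ`. -/
abbrev tL : Λ := T 1

/-- A medial quandle structure on a type `Q`: an idempotent binary operation whose right
translations are bijections, satisfying the medial law. -/
structure MedialQuandleStr (Q : Type*) where
  op : Q → Q → Q
  idem : ∀ x, op x x = x
  bij : ∀ y, Function.Bijective fun x => op x y
  medial : ∀ w x y z, op (op w x) (op y z) = op (op w y) (op x z)

/-- A quandle structure on a type `T`. -/
structure QuandleStr (T : Type*) where
  op : T → T → T
  idem : ∀ x, op x x = x
  bij : ∀ y, Function.Bijective fun x => op x y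
  distrib : ∀ x y z, op (op x y) z = op (op x z) (op y z)

namespace MedialQuandleStr

variable {Q : Type*} (s : MedialQuandleStr Q)

/-- The translation `β_y : x ↦ x ▷ y`, as a permutation of `Q`. -/
def β (y : Q) : Equiv.Perm Q := Equiv.ofBijective _ (s.bij y)

/-- `β(Q)`: the subgroup of permutations generated by the translations. -/
def transGroup : Subgroup (Equiv.Perm Q) := Subgroup.closure (Set.range s.β)

/-- The displacement group `Dis(Q)`, generated by the elementary displacements
`β_y β_z⁻¹`. -/
def Dis : Subgroup (Equiv.Perm Q) :=
  Subgroup.closure {d : Equiv.Perm Q | ∃ y z, d = s.β y * (s.β z)⁻¹}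

/-- The orbit of `q`: the smallest subset of `Q` containing `q` and closed under the
action of `β(Q)`. -/
def orbit (q : Q) : Set Q := {x | ∃ g ∈ s.transGroup, g q = x}

end MedialQuandleStr

section Construction

variable {M : Type*} [AddCommGroup M] [Module Λ M] {I : Type*}

/-- The carrier of the quandle `Q(N,(m_i),(X_i))`: the disjoint union of the quotients
`Q_i = N/X_i`. -/
def QCar (N : Submodule Λ M) (X : I → Submodule Λ ↥N) : Type _ :=
  Σ i : I, ↥N ⧸ X i

/-- The condition `(1-t)·X_i = 0` for all `i`. -/
def annCond (N : Submodule Λ M) (X : I → Submodule Λ ↥N) : Prop :=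
  ∀ i, ∀ x ∈ X i, (1 - tL) • (x : ↥N) = 0

/-- Multiplication by `1-t`, descended from `N/X_j` to `N` (well defined since
`(1-t)·X_j = 0`). -/
def oneSubT (N : Submodule Λ M) {X : I → Submodule Λ ↥N} (h : annCond N X) (j : I) :
    (↥N ⧸ X j) →ₗ[Λ] ↥N :=
  Submodule.liftQ (X j) ((1 - tL) • (LinearMap.id : ↥N →ₗ[Λ] ↥N))
    (fun x hx => by simpa using h j x hx)

/-- The operation of `Q(N,(m_i),(X_i))`: for `x ∈ Q_i` and `y ∈ Q_j`,
`x ▷ y = m_j - m_i + t·x + (1-t)·y + X_i ∈ Q_i`. -/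
def qop (N : Submodule Λ M) (m : I → M) {X : I → Submodule Λ ↥N}
    (hm : ∀ i j, m i - m j ∈ N) (h : annCond N X) :
    QCar N X → QCar N X → QCar N X :=
  fun x y =>
    ⟨x.1, Submodule.Quotient.mk (⟨m y.1 - m x.1, hm y.1 x.1⟩ : ↥N)
        + tL • x.2 + Submodule.Quotient.mk (oneSubT N h y.1 y.2)⟩

end Construction

section Aux

variable {M : Type*} [AddCommGroup M] [Module Λ M] {I : Type*}
variable (N : Submodule Λ M) (m : I → M) (X : I → Submodule Λ ↥N)
variable (hm : ∀ i j, m i - m j ∈ N) (h : annCond N X)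

/-- The generating set of `N''`. -/
def gens : Set ↥N :=
  (⋂ i : I, (X i : Set ↥N))
    ∪ Set.range (fun a : ↥N => (1 - tL) • a)
    ∪ {v : ↥N | ∃ j k : I, v = ⟨m j - m k, hm j k⟩}

/-- Translation by `n` on every fiber, as a permutation. -/
def tmap (n : ↥N) : Equiv.Perm (QCar N X) where
  toFun x := ⟨x.1, x.2 + Submodule.Quotient.mk n⟩
  invFun x := ⟨x.1, x.2 - Submodule.Quotient.mk n⟩
  left_inv x := by
    show (⟨x.1, x.2 + Submodule.Quotient.mk n - Submodule.Quotient.mk n⟩ : QCar N X) = x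
    rw [add_sub_cancel_right]
    rfl
  right_inv x := by
    show (⟨x.1, x.2 - Submodule.Quotient.mk n + Submodule.Quotient.mk n⟩ : QCar N X) = x
    rw [sub_add_cancel]
    rfl

lemma tmap_apply (n : ↥N) (i : I) (q : ↥N ⧸ X i) :
    tmap N X n ⟨i, q⟩ = ⟨i, q + Submodule.Quotient.mk n⟩ := rfl

lemma oneSubT_mk (j : I) (a : ↥N) :
    oneSubT N h j (Submodule.Quotient.mk a) = (1 - tL) • a := rfl

/-- The translation element of the elementary displacement `β_y β_z⁻¹`. -/
def nel (y z : QCar N X) : ↥N :=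
  ⟨m y.1 - m z.1, hm y.1 z.1⟩ + oneSubT N h y.1 y.2 - oneSubT N h z.1 z.2

lemma perm_ext {f g : Equiv.Perm (QCar N X)}
    (hfg : ∀ (i : I) (q : ↥N ⧸ X i), f ⟨i, q⟩ = g ⟨i, q⟩) : f = g :=
  Equiv.ext fun x => hfg x.1 x.2

lemma qop_apply (i : I) (q : ↥N ⧸ X i) (y : QCar N X) :
    qop N m hm h ⟨i, q⟩ y
      = ⟨i, Submodule.Quotient.mk (⟨m y.1 - m i, hm y.1 i⟩ : ↥N) + tL • q
            + Submodule.Quotient.mk (oneSubT N h y.1 y.2)⟩ := rfl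

variable (s : MedialQuandleStr (QCar N X))

lemma beta_apply (y x : QCar N X) : s.β y x = s.op x y := rfl

lemma beta_eq (hs : s.op = qop N m hm h) (y z : QCar N X) :
    s.β y = tmap N X (nel N m X hm h y z) * s.β z := by
  apply perm_ext
  intro i q
  erw [Equiv.Perm.mul_apply, beta_apply, beta_apply, hs, qop_apply, qop_apply, tmap_apply]
  have key : (⟨m y.1 - m i, hm y.1 i⟩ : ↥N) + oneSubT N h y.1 y.2
      = (⟨m z.1 - m i, hm z.1 i⟩ + oneSubT N h z.1 z.2) + nel N m X hm h y z := by
    have h1 : (⟨m y.1 - m i, hm y.1 i⟩ : ↥N)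
        = ⟨m z.1 - m i, hm z.1 i⟩ + ⟨m y.1 - m z.1, hm y.1 z.1⟩ := by
      apply Subtype.ext
      show m y.1 - m i = (m z.1 - m i) + (m y.1 - m z.1)
      abel
    rw [nel, h1]; abel
  have keyq := congrArg (Submodule.Quotient.mk (p := X i)) key
  simp only [Submodule.Quotient.mk_add] at keyq
  refine congrArg (fun v => (⟨i, v⟩ : QCar N X)) ?_
  rw [add_right_comm, keyq]
  abel

lemma dis_elem_eq (hs : s.op = qop N m hm h) (y z : QCar N X) :
    s.β y * (s.β z)⁻¹ = tmap N X (nel N m X hm h y z) := by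
  rw [beta_eq N m X hm h s hs y z, mul_inv_cancel_right]

lemma nel_mem_span (y z : QCar N X) :
    nel N m X hm h y z ∈ Submodule.span Λ (gens N m X hm) := by
  refine sub_mem (add_mem ?_ ?_) ?_
  · exact Submodule.subset_span (Or.inr ⟨y.1, z.1, rfl⟩)
  · obtain ⟨a, ha⟩ := Submodule.Quotient.mk_surjective _ y.2
    exact Submodule.subset_span (Or.inl (Or.inr ⟨a, by rw [← ha, oneSubT_mk]⟩))
  · obtain ⟨a, ha⟩ := Submodule.Quotient.mk_surjective _ z.2
    exact Submodule.subset_span (Or.inl (Or.inr ⟨a, by rw [← ha, oneSubT_mk]⟩))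

lemma dis_structure (hs : s.op = qop N m hm h) :
    ∀ d ∈ s.Dis, ∃ n ∈ Submodule.span Λ (gens N m X hm),
      ∀ (i : I) (x : ↥N ⧸ X i), d ⟨i, x⟩ = ⟨i, x + Submodule.Quotient.mk n⟩ := by
  have hG : s.Dis ≤
      { carrier := {d : Equiv.Perm (QCar N X) |
          ∃ n ∈ Submodule.span Λ (gens N m X hm),
            ∀ (i : I) (x : ↥N ⧸ X i), d ⟨i, x⟩ = ⟨i, x + Submodule.Quotient.mk n⟩}
        one_mem' := ⟨0, zero_mem _, fun i x => by
          show (⟨i, x⟩ : QCar N X) = ⟨i, x + Submodule.Quotient.mk 0⟩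
          rw [Submodule.Quotient.mk_zero, add_zero]⟩
        mul_mem' := by
          rintro d d' ⟨n, hn, hd⟩ ⟨n', hn', hd'⟩
          refine ⟨n + n', add_mem hn hn', fun i x => ?_⟩
          erw [Equiv.Perm.mul_apply]
          rw [hd', hd]
          refine congrArg (fun v => (⟨i, v⟩ : QCar N X)) ?_
          rw [Submodule.Quotient.mk_add]; abel
        inv_mem' := by
          rintro d ⟨n, hn, hd⟩
          refine ⟨-n, neg_mem hn, fun i x => ?_⟩
          show d.symm ⟨i, x⟩ = ⟨i, x + Submodule.Quotient.mk (-n)⟩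
          erw [Equiv.symm_apply_eq]
          rw [hd]
          refine congrArg (fun v => (⟨i, v⟩ : QCar N X)) ?_
          rw [Submodule.Quotient.mk_neg]; abel } := by
    rw [MedialQuandleStr.Dis, Subgroup.closure_le]
    rintro d ⟨y, z, rfl⟩
    exact ⟨nel N m X hm h y z, nel_mem_span N m X hm h y z, fun i x => by
      rw [dis_elem_eq N m X hm h s hs, tmap_apply]⟩
  exact fun d hd => hG hd

end Aux
/-- Let `Q = Q(N,(m_i),(X_i))` (with medial quandle structure `s`
whose operation is `qop`), and let `P = N'` be the submodule of those `n ∈ N` for which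
`d_n : x ↦ x + n + X_i` is a displacement of `Q`. Then `N'` equals the `Λ`-submodule
`N''` of `N` generated by `(⋂ i, X_i) ∪ (1-t)·N ∪ {m_j - m_k}`, and the kernel of the
surjection `n ↦ d_n` is exactly `⋂ i, X_i`. -/
theorem stmt14 {M : Type*} [AddCommGroup M] [Module Λ M] {I : Type*} [Nonempty I]
    (N : Submodule Λ M) (m : I → M) (X : I → Submodule Λ ↥N)
    (hm : ∀ i j, m i - m j ∈ N) (h : annCond N X)
    (s : MedialQuandleStr (QCar N X)) (hs : s.op = qop N m hm h)
    (P : Submodule Λ ↥N)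
    (hP : ∀ n : ↥N,
      n ∈ P ↔ ∃ d ∈ s.Dis, ∀ (i : I) (x : ↥N ⧸ X i),
        d ⟨i, x⟩ = ⟨i, x + Submodule.Quotient.mk n⟩) :
    Submodule.span Λ ((⋂ i : I, (X i : Set ↥N))
        ∪ Set.range (fun a : ↥N => (1 - tL) • a)
        ∪ {v : ↥N | ∃ j k : I, v = ⟨m j - m k, hm j k⟩}) = P ∧
    (∀ n ∈ P, ∀ d ∈ s.Dis,
      (∀ (i : I) (x : ↥N ⧸ X i), d ⟨i, x⟩ = ⟨i, x + Submodule.Quotient.mk n⟩) →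
      (d = 1 ↔ n ∈ ⋂ i : I, (X i : Set ↥N))) := by
  have hgens : ((⋂ i : I, (X i : Set ↥N))
        ∪ Set.range (fun a : ↥N => (1 - tL) • a)
        ∪ {v : ↥N | ∃ j k : I, v = ⟨m j - m k, hm j k⟩}) = gens N m X hm := rfl
  rw [hgens]
  have snd_inj : ∀ (i : I) (a b : ↥N ⧸ X i), (⟨i, a⟩ : QCar N X) = ⟨i, b⟩ → a = b := by
    intro i a b hab
    exact eq_of_heq (Sigma.mk.inj_iff.mp hab).2
  constructor
  · apply le_antisymm
    · rw [Submodule.span_le]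
      rintro v ((hv | ⟨a, rfl⟩) | ⟨j, k, rfl⟩)
      · rw [SetLike.mem_coe, hP]
        refine ⟨1, one_mem _, fun i x => ?_⟩
        have : Submodule.Quotient.mk (p := X i) v = 0 :=
          (Submodule.Quotient.mk_eq_zero _).2 (Set.mem_iInter.mp hv i)
        show (⟨i, x⟩ : QCar N X) = ⟨i, x + Submodule.Quotient.mk v⟩
        rw [this, add_zero]
      · obtain ⟨i₀⟩ := ‹Nonempty I›
        rw [SetLike.mem_coe, hP]
        set y : QCar N X := ⟨i₀, Submodule.Quotient.mk a⟩
        set z : QCar N X := ⟨i₀, 0⟩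
        have hnel : nel N m X hm h y z = (1 - tL) • a := by
          rw [nel]
          have h0 : (⟨m y.1 - m z.1, hm y.1 z.1⟩ : ↥N) = 0 := Subtype.ext (sub_self _)
          rw [h0]
          show 0 + oneSubT N h i₀ (Submodule.Quotient.mk a) - oneSubT N h i₀ 0 = _
          rw [oneSubT_mk, map_zero, zero_add, sub_zero]
        refine ⟨s.β y * (s.β z)⁻¹, Subgroup.subset_closure ⟨y, z, rfl⟩, fun i x => ?_⟩
        rw [dis_elem_eq N m X hm h s hs, tmap_apply, hnel]
      · rw [SetLike.mem_coe, hP]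
        set y : QCar N X := ⟨j, 0⟩
        set z : QCar N X := ⟨k, 0⟩
        have hnel : nel N m X hm h y z = ⟨m j - m k, hm j k⟩ := by
          rw [nel]
          show _ + oneSubT N h j 0 - oneSubT N h k 0 = _
          rw [map_zero, map_zero, add_zero, sub_zero]
        refine ⟨s.β y * (s.β z)⁻¹, Subgroup.subset_closure ⟨y, z, rfl⟩, fun i x => ?_⟩
        rw [dis_elem_eq N m X hm h s hs, tmap_apply, hnel]
    · intro n hn
      rw [hP] at hn
      obtain ⟨d, hdDis, hd⟩ := hn
      obtain ⟨n', hn', hd'⟩ := dis_structure N m X hm h s hs d hdDis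
      have hsub : n - n' ∈ Submodule.span Λ (gens N m X hm) := by
        refine Submodule.subset_span (Or.inl (Or.inl (Set.mem_iInter.mpr fun i => ?_)))
        have := (hd i 0).symm.trans (hd' i 0)
        have hq := snd_inj i _ _ this
        rw [zero_add, zero_add] at hq
        have : Submodule.Quotient.mk (p := X i) (n - n') = 0 := by
          rw [Submodule.Quotient.mk_sub, hq, sub_self]
        exact (Submodule.Quotient.mk_eq_zero _).1 this
      have := add_mem hn' hsub
      simpa using this
  · intro n hnP d hdDis hd
    constructor
    · intro h1
      refine Set.mem_iInter.mpr fun i => ?_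
      have := hd i 0
      rw [h1] at this
      have hq := snd_inj i _ _ this.symm
      rw [zero_add] at hq
      exact (Submodule.Quotient.mk_eq_zero _).1 hq
    · intro hn
      apply perm_ext N X
      intro i x
      rw [hd i x, (Submodule.Quotient.mk_eq_zero _).2 (Set.mem_iInter.mp hn i), add_zero]
      rfl
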